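/- Let H be a complex Hilbert space, M a von Neumann algebra on H, and Ψ, Φ ∈ H vectors such that ⟪Ψ, a Ψ⟫ = ⟪Φ, a Φ⟫ for all a ∈ M. Then there exists a partial isometry v in the commutant M.commutant (i.e. v * (adjoint v) * v = v) with v Ψ = Φ. (Uniqueness of the GNS representation: the intertwining unitary between the cyclic subspaces closure(M Ψ) and closure(M Φ) extends to a partial isometry commuting with M.) -/

import Mathlib

open scoped InnerProductSpace

/-- Uniqueness of the GNS representation: if two vectors induce the same state on a
von Neumann algebra `M`, they are related by a partial isometry in the commutant of `M`. -/
theorem exists_partialIsometry_commutant_of_same_state {H : Type*} [NormedAddCommGroup H]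
    [InnerProductSpace ℂ H] [CompleteSpace H]
    (M : VonNeumannAlgebra H)
    (Ψ Φ : H) (hmarg : ∀ a ∈ M, ⟪Ψ, a Ψ⟫_ℂ = ⟪Φ, a Φ⟫_ℂ) :
    ∃ v ∈ M.commutant, v * (ContinuousLinearMap.adjoint v) * v = v ∧ v Ψ = Φ := by
  classical
  set N : Submodule ℂ (H →L[ℂ] H) := Subalgebra.toSubmodule M.toStarSubalgebra.toSubalgebra
    with hN
  have hNM : ∀ x : H →L[ℂ] H, x ∈ N ↔ x ∈ M := fun x => Iff.rfl
  -- evaluation maps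
  let evΨ : N →ₗ[ℂ] H :=
    { toFun := fun a => (a : H →L[ℂ] H) Ψ
      map_add' := fun a b => by simp
      map_smul' := fun c a => by simp }
  let evΦ : N →ₗ[ℂ] H :=
    { toFun := fun a => (a : H →L[ℂ] H) Φ
      map_add' := fun a b => by simp
      map_smul' := fun c a => by simp }
  -- the key norm identity
  have hinner : ∀ a : N, ⟪(a : H →L[ℂ] H) Φ, (a : H →L[ℂ] H) Φ⟫_ℂ
      = ⟪(a : H →L[ℂ] H) Ψ, (a : H →L[ℂ] H) Ψ⟫_ℂ := by
    intro a
    have hmem : (star (a : H →L[ℂ] H)) * (a : H →L[ℂ] H) ∈ M :=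
      mul_mem (star_mem ((hNM _).1 a.2)) ((hNM _).1 a.2)
    have := (hmarg _ hmem).symm
    rwa [ContinuousLinearMap.mul_apply, ContinuousLinearMap.mul_apply,
      ContinuousLinearMap.star_eq_adjoint, ContinuousLinearMap.adjoint_inner_right,
      ContinuousLinearMap.adjoint_inner_right] at this
  have hnorm : ∀ a : N, ‖(a : H →L[ℂ] H) Φ‖ = ‖(a : H →L[ℂ] H) Ψ‖ := by
    intro a
    have h := hinner a
    rw [inner_self_eq_norm_sq_to_K, inner_self_eq_norm_sq_to_K] at h
    have h2 : (‖(a : H →L[ℂ] H) Φ‖ : ℝ) ^ 2 = ‖(a : H →L[ℂ] H) Ψ‖ ^ 2 := by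
      exact_mod_cast h
    nlinarith [norm_nonneg ((a : H →L[ℂ] H) Φ), norm_nonneg ((a : H →L[ℂ] H) Ψ)]
  -- the kernel inclusion
  have hker : LinearMap.ker evΨ ≤ LinearMap.ker evΦ := by
    intro a ha
    have h0 : (a : H →L[ℂ] H) Ψ = 0 := ha
    have : ‖(a : H →L[ℂ] H) Φ‖ = 0 := by rw [hnorm a, h0, norm_zero]
    simpa [evΦ, norm_eq_zero] using this
  set S : Submodule ℂ H := LinearMap.range evΨ with hS
  -- the densely-defined intertwiner, as a linear isometry on `S`
  let f : S →ₗ[ℂ] H :=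
    (Submodule.liftQ (LinearMap.ker evΨ) evΦ hker) ∘ₗ
      (LinearMap.quotKerEquivRange evΨ).symm.toLinearMap
  have hf : ∀ a : N, f ⟨evΨ a, LinearMap.mem_range_self _ a⟩ = evΦ a := by
    intro a
    have h1 : (LinearMap.quotKerEquivRange evΨ) (Submodule.Quotient.mk a)
        = ⟨evΨ a, LinearMap.mem_range_self _ a⟩ :=
      Subtype.ext (LinearMap.quotKerEquivRange_apply_mk evΨ a)
    have h2 : (LinearMap.quotKerEquivRange evΨ).symm ⟨evΨ a, LinearMap.mem_range_self _ a⟩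
        = Submodule.Quotient.mk a := by
      rw [← h1, LinearEquiv.symm_apply_apply]
    show (Submodule.liftQ (LinearMap.ker evΨ) evΦ hker)
        ((LinearMap.quotKerEquivRange evΨ).symm ⟨evΨ a, LinearMap.mem_range_self _ a⟩) = evΦ a
    rw [h2, Submodule.liftQ_apply]
  have hfiso : ∀ x : S, ‖f x‖ = ‖x‖ := by
    rintro ⟨x, hx⟩
    obtain ⟨a, rfl⟩ := hx
    rw [hf a]
    exact hnorm a
  let fi : S →ₗᵢ[ℂ] H := ⟨f, hfiso⟩
  let fc : S →L[ℂ] H := fi.toContinuousLinearMap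
  set K : Submodule ℂ H := S.topologicalClosure with hK
  have hSK : S ≤ K := Submodule.le_topologicalClosure S
  -- the inclusion of `S` into `K`
  let e : S →L[ℂ] K :=
    { toLinearMap := Submodule.inclusion hSK
      cont := Continuous.subtype_mk continuous_subtype_val _ }
  have he_iso : Isometry e := Isometry.of_dist_eq fun x y => rfl
  have hdense : DenseRange e := by
    intro x
    have hx : (x : H) ∈ closure (S : Set H) := x.2
    rw [mem_closure_iff_seq_limit] at hx
    obtain ⟨u, hu, hlim⟩ := hx
    rw [mem_closure_iff_seq_limit]
    refine ⟨fun n => e ⟨u n, hu n⟩, fun n => ⟨⟨u n, hu n⟩, rfl⟩, ?_⟩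
    exact tendsto_subtype_rng.2 hlim
  let T : K →L[ℂ] H := fc.extend e
  have hTe : ∀ x : S, T (e x) = fc x := fun x =>
    ContinuousLinearMap.extend_eq fc hdense he_iso.isUniformInducing x
  have hTiso : ∀ x : K, ‖T x‖ = ‖x‖ := by
    have hclosed : IsClosed {x : K | ‖T x‖ = ‖x‖} :=
      isClosed_eq (continuous_norm.comp T.continuous) continuous_norm
    intro x
    refine hdense.induction_on x hclosed fun a => ?_
    show ‖T (e a)‖ = ‖e a‖
    rw [hTe a]
    exact hfiso a
  let Ti : K →ₗᵢ[ℂ] H := ⟨(T : K →ₗ[ℂ] H), hTiso⟩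
  let P : H →L[ℂ] K := K.orthogonalProjectionOnto
  let v : H →L[ℂ] H := T ∘L P
  -- value of v on S
  have hvS : ∀ a : N, v (evΨ a) = evΦ a := by
    intro a
    have hmemS : evΨ a ∈ S := LinearMap.mem_range_self _ a
    have hmemK : evΨ a ∈ K := hSK hmemS
    have hP : P (evΨ a) = ⟨evΨ a, hmemK⟩ :=
      Subtype.ext (K.starProjection_eq_self_iff.2 hmemK)
    have he' : e ⟨evΨ a, hmemS⟩ = ⟨evΨ a, hmemK⟩ := rfl
    show T (P (evΨ a)) = evΦ a
    rw [hP, ← he', hTe]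
    exact hf a
  -- value of v on the orthogonal complement
  have hvO : ∀ w ∈ Kᗮ, v w = 0 := by
    intro w hw
    show T (P w) = 0
    rw [show P w = 0 from Submodule.orthogonalProjectionOnto_apply_of_mem_orthogonal hw,
      map_zero]
  -- K is invariant under M
  have hKinv : ∀ a ∈ M, ∀ x ∈ K, (a : H →L[ℂ] H) x ∈ K := by
    intro a ha x hx
    have hmaps : Set.MapsTo a (S : Set H) (K : Set H) := by
      rintro _ ⟨b, rfl⟩
      exact hSK ⟨⟨(a : H →L[ℂ] H) * (b : H →L[ℂ] H),
        (hNM _).2 (mul_mem ha ((hNM _).1 b.2))⟩, rfl⟩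
    have : Set.MapsTo a (closure (S : Set H)) (closure (K : Set H)) :=
      hmaps.closure a.continuous
    have hclosed : closure (K : Set H) = (K : Set H) :=
      IsClosed.closure_eq (Submodule.isClosed_topologicalClosure S)
    have hx' : x ∈ closure (S : Set H) := hx
    have h4 := this hx'
    rw [hclosed] at h4
    exact h4
  -- Kᗮ is invariant under M
  have hOinv : ∀ a ∈ M, ∀ w ∈ Kᗮ, (a : H →L[ℂ] H) w ∈ Kᗮ := by
    intro a ha w hw
    intro u hu
    rw [← ContinuousLinearMap.adjoint_inner_left]
    exact hw _ (hKinv _ (by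
      simpa [ContinuousLinearMap.star_eq_adjoint] using star_mem (s := M.toStarSubalgebra) ha) u hu)
  -- the dense subspace `S ⊔ Kᗮ`
  have hdenseD : Dense ((S ⊔ Kᗮ : Submodule ℂ H) : Set H) := by
    rw [Submodule.dense_iff_topologicalClosure_eq_top]
    refine le_antisymm le_top ?_
    rw [← Submodule.sup_orthogonal_of_hasOrthogonalProjection (K := K)]
    refine sup_le ?_ ?_
    · exact Submodule.topologicalClosure_mono le_sup_left
    · exact le_trans le_sup_right (Submodule.le_topologicalClosure _)
  -- v commutes with M
  have hcomm : ∀ a ∈ M, ∀ x : H, v ((a : H →L[ℂ] H) x) = (a : H →L[ℂ] H) (v x) := by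
    intro a ha
    have heq : (fun x => v ((a : H →L[ℂ] H) x)) = fun x => (a : H →L[ℂ] H) (v x) := by
      refine Continuous.ext_on hdenseD (v.continuous.comp a.continuous)
        (a.continuous.comp v.continuous) ?_
      intro x hx
      rw [SetLike.mem_coe, Submodule.mem_sup] at hx
      obtain ⟨s, hs, w, hw, rfl⟩ := hx
      obtain ⟨b, rfl⟩ := hs
      set ab : N := ⟨(a : H →L[ℂ] H) * (b : H →L[ℂ] H),
        (hNM _).2 (mul_mem ha ((hNM _).1 b.2))⟩ with hab
      have h1 : (a : H →L[ℂ] H) (evΨ b) = evΨ ab := rfl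
      have h2 : v ((a : H →L[ℂ] H) (evΨ b)) = (a : H →L[ℂ] H) (v (evΨ b)) := by
        rw [h1, hvS, hvS]
        rfl
      have h3 : v ((a : H →L[ℂ] H) w) = (a : H →L[ℂ] H) (v w) := by
        rw [hvO _ hw, hvO _ (hOinv a ha w hw), map_zero]
      simp only [map_add]
      rw [h2, h3]
    exact fun x => congrFun heq x
  -- adjoint v ∘ v = orthogonal projection onto K
  have hadj : ∀ x : H, (ContinuousLinearMap.adjoint v) (v x) = (P x : H) := by
    intro x
    refine ext_inner_left ℂ fun z => ?_
    rw [ContinuousLinearMap.adjoint_inner_right]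
    show ⟪T (P z), T (P x)⟫_ℂ = ⟪z, (P x : H)⟫_ℂ
    rw [show ⟪T (P z), T (P x)⟫_ℂ = ⟪(P z : K), (P x : K)⟫_ℂ from Ti.inner_map_map _ _,
      Submodule.coe_inner, ← Submodule.starProjection_apply, Submodule.inner_starProjection_left_eq_right,
      Submodule.starProjection_apply, Submodule.orthogonalProjectionOnto_mem_subspace_eq_self]
  refine ⟨v, ?_, ?_, ?_⟩
  · rw [VonNeumannAlgebra.mem_commutant_iff]
    intro g hg
    ext x
    exact (hcomm g hg x).symm
  · ext x
    show v ((ContinuousLinearMap.adjoint v) (v x)) = v x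
    rw [hadj x]
    show T (P (P x : H)) = T (P x)
    congr 1
    exact Submodule.orthogonalProjectionOnto_mem_subspace_eq_self (P x)
  · have h1mem : (1 : H →L[ℂ] H) ∈ N := (hNM _).2 (one_mem M)
    have h1 : Ψ = evΨ ⟨1, h1mem⟩ := by simp [evΨ]
    have h2 : evΦ ⟨1, h1mem⟩ = Φ := by simp [evΦ]
    rw [h1, hvS, h2]
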